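/- Inheritance of local control consistency under synchronous composition: let L(G_i) ⊆ E_i* for i = 1,2, E = E₁∪E₂, E_k ⊆ E with E₁∩E₂ ⊆ E_k, and let G_k be a generator over E_k. If the projection P_k^{i+k} : (E_i∪E_k)* → E_k* is LCC for (P_i^{i+k})⁻¹(L(G_i)) for i = 1,2, then the projection P_k : E* → E_k* is LCC for L = L(G₁ ∥ G₂ ∥ G_k). -/
import Mathlib

open scoped Classical

/-- Natural projection: erase letters not in `A`. -/
noncomputable def proj {Ev : Type*} (A : Set Ev) (w : List Ev) : List Ev :=
  w.filter (fun a => decide (a ∈ A))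

/-- Projection of a language. -/
noncomputable def projL {Ev : Type*} (A : Set Ev) (L : Set (List Ev)) : Set (List Ev) :=
  proj A '' L

/-- Words over an alphabet `A`, i.e., `A*`. -/
def star {Ev : Type*} (A : Set Ev) : Set (List Ev) := {w | ∀ a ∈ w, a ∈ A}

/-- Synchronous product of `L₁ ⊆ A*` and `L₂ ⊆ B*`. -/
noncomputable def sync {Ev : Type*} (A B : Set Ev) (L1 L2 : Set (List Ev)) :
    Set (List Ev) :=
  {w | w ∈ star (A ∪ B) ∧ proj A w ∈ L1 ∧ proj B w ∈ L2}

/-- Prefix closure of a language. -/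
def prefixCl {Ev : Type*} (L : Set (List Ev)) : Set (List Ev) := {w | ∃ v, w ++ v ∈ L}

/-- Controllability of `K` with respect to (prefix-closed) `L` and uncontrollable events `Eu`. -/
def controllable {Ev : Type*} (K L : Set (List Ev)) (Eu : Set Ev) : Prop :=
  ∀ s ∈ prefixCl K, ∀ u ∈ Eu, s ++ [u] ∈ L → s ++ [u] ∈ prefixCl K

/-- Supremal controllable sublanguage of `K` w.r.t. `N` and `U`. -/
noncomputable def supC {Ev : Type*} (K N : Set (List Ev)) (U : Set Ev) : Set (List Ev) :=
  ⋃₀ {M | M ⊆ K ∧ controllable M N U}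

/-- `proj A` is an `L`-observer. -/
def observer {Ev : Type*} (A : Set Ev) (L : Set (List Ev)) : Prop :=
  ∀ t ∈ projL A L, ∀ s ∈ prefixCl L, proj A s <+: t →
    ∃ u, s ++ u ∈ L ∧ proj A (s ++ u) = t

/-- `proj A` is locally control consistent (LCC) for `L` (w.r.t. uncontrollable events `Eu`). -/
def lcc {Ev : Type*} (A Eu : Set Ev) (L : Set (List Ev)) : Prop :=
  ∀ s ∈ L, ∀ σ ∈ A ∩ Eu, proj A s ++ [σ] ∈ projL A L →
    (∃ u, (∀ a ∈ u, a ∉ A) ∧ s ++ u ++ [σ] ∈ L) →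
    ∃ u, (∀ a ∈ u, a ∈ Eu ∧ a ∉ A) ∧ s ++ u ++ [σ] ∈ L

section Aux
variable {Ev : Type*}

lemma proj_append (A : Set Ev) (w v : List Ev) :
    proj A (w ++ v) = proj A w ++ proj A v := by
  simp [proj]

lemma proj_nil_of (A : Set Ev) {u : List Ev} (h : ∀ a ∈ u, a ∉ A) :
    proj A u = [] := by
  simp only [proj, List.filter_eq_nil_iff]
  intro a ha; simpa using h a ha

lemma proj_singleton_mem (A : Set Ev) {σ : Ev} (h : σ ∈ A) : proj A [σ] = [σ] := by
  simp [proj, h]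

lemma proj_mem_star (A : Set Ev) (w : List Ev) : proj A w ∈ star A := by
  intro a ha
  simp only [proj, List.mem_filter, decide_eq_true_eq] at ha
  exact ha.2

lemma mem_of_mem_proj {A : Set Ev} {w : List Ev} {a : Ev} (h : a ∈ proj A w) : a ∈ w :=
  List.mem_of_mem_filter h

lemma proj_proj {A B : Set Ev} (h : A ⊆ B) (w : List Ev) :
    proj A (proj B w) = proj A w := by
  induction w with
  | nil => rfl
  | cons a t ih =>
    by_cases hb : a ∈ B
    · by_cases ha : a ∈ A <;> simp [proj, hb, ha, List.filter_cons] <;>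
        simpa [proj] using ih
    · have ha : a ∉ A := fun hx => hb (h hx)
      simp [proj, hb, ha, List.filter_cons]
      simpa [proj] using ih

end Aux

/-- inheritance of local control consistency under synchronous composition. -/
theorem stmt14 {Ev : Type*} (E1 E2 Ek Eu : Set Ev) (hsh : E1 ∩ E2 ⊆ Ek)
    (LG1 LG2 LGk : Set (List Ev))
    (hLG1 : LG1 ⊆ star E1) (hLG2 : LG2 ⊆ star E2) (hLGk : LGk ⊆ star Ek)
    (hLG1c : prefixCl LG1 = LG1) (hLG2c : prefixCl LG2 = LG2) (hLGkc : prefixCl LGk = LGk)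
    (hlcc1 : lcc Ek Eu {w | w ∈ star (E1 ∪ Ek) ∧ proj E1 w ∈ LG1})
    (hlcc2 : lcc Ek Eu {w | w ∈ star (E2 ∪ Ek) ∧ proj E2 w ∈ LG2}) :
    lcc Ek Eu (sync E1 (E2 ∪ Ek) LG1 (sync E2 Ek LG2 LGk)) := by
  intro s hs σ hσ hprojmem hex
  obtain ⟨hσk, hσu⟩ := hσ
  obtain ⟨u, hu, hω⟩ := hex
  have hE1 : E1 ⊆ E1 ∪ Ek := Set.subset_union_left
  have hKE1 : Ek ⊆ E1 ∪ Ek := Set.subset_union_right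
  have hE2 : E2 ⊆ E2 ∪ Ek := Set.subset_union_left
  have hKE2 : Ek ⊆ E2 ∪ Ek := Set.subset_union_right
  obtain ⟨hsstar, hs1, -, hs2, hsk⟩ := hs
  obtain ⟨hwstar, hw1, -, hw2, hwk⟩ := hω
  rw [proj_proj hE2] at hs2 hw2
  rw [proj_proj hKE2] at hsk hwk
  have hpu : proj Ek u = [] := proj_nil_of Ek hu
  have hσs : proj Ek [σ] = [σ] := proj_singleton_mem Ek hσk
  simp only [proj_append, hpu, hσs, List.append_nil] at hwk
  -- hwk : proj Ek s ++ [σ] ∈ LGk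
  -- Part 1 : apply hlcc1 to proj (E1 ∪ Ek) s
  set s₁ := proj (E1 ∪ Ek) s with hs₁
  set u₁ := proj (E1 ∪ Ek) u with hu₁def
  have hw₁mem : s₁ ++ u₁ ++ [σ] ∈ {w | w ∈ star (E1 ∪ Ek) ∧ proj E1 w ∈ LG1} := by
    constructor
    · intro a ha
      simp only [List.mem_append, List.mem_singleton] at ha
      rcases ha with (ha | ha) | rfl
      · exact proj_mem_star _ _ a ha
      · exact proj_mem_star _ _ a ha
      · exact Or.inr hσk
    · have he : proj E1 (s₁ ++ u₁ ++ [σ]) = proj E1 (s ++ u ++ [σ]) := by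
        simp only [hs₁, hu₁def, proj_append, proj_proj hE1]
      rw [he]; exact hw1
  obtain ⟨u₁', hu₁'P, hu₁'mem⟩ :=
    hlcc1 s₁ ⟨proj_mem_star _ _, by rw [proj_proj hE1]; exact hs1⟩ σ ⟨hσk, hσu⟩
      (⟨s₁ ++ u₁ ++ [σ], hw₁mem, by
        simp only [hs₁, hu₁def, proj_append, proj_proj hKE1, hpu, hσs, List.append_nil]⟩)
      ⟨u₁, fun a ha => hu a (mem_of_mem_proj ha), hw₁mem⟩
  have hu₁'E1 : ∀ a ∈ u₁', a ∈ E1 ∧ a ∉ Ek := by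
    intro a ha
    have hnk := (hu₁'P a ha).2
    have : a ∈ E1 ∪ Ek := hu₁'mem.1 a (by simp [ha])
    exact ⟨this.resolve_right hnk, hnk⟩
  -- Part 2 : apply hlcc2 to proj (E2 ∪ Ek) s
  set s₂ := proj (E2 ∪ Ek) s with hs₂
  set u₂ := proj (E2 ∪ Ek) u with hu₂def
  have hw₂mem : s₂ ++ u₂ ++ [σ] ∈ {w | w ∈ star (E2 ∪ Ek) ∧ proj E2 w ∈ LG2} := by
    constructor
    · intro a ha
      simp only [List.mem_append, List.mem_singleton] at ha
      rcases ha with (ha | ha) | rfl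
      · exact proj_mem_star _ _ a ha
      · exact proj_mem_star _ _ a ha
      · exact Or.inr hσk
    · have he : proj E2 (s₂ ++ u₂ ++ [σ]) = proj E2 (s ++ u ++ [σ]) := by
        simp only [hs₂, hu₂def, proj_append, proj_proj hE2]
      rw [he]; exact hw2
  obtain ⟨u₂', hu₂'P, hu₂'mem⟩ :=
    hlcc2 s₂ ⟨proj_mem_star _ _, by rw [proj_proj hE2]; exact hs2⟩ σ ⟨hσk, hσu⟩
      (⟨s₂ ++ u₂ ++ [σ], hw₂mem, by
        simp only [hs₂, hu₂def, proj_append, proj_proj hKE2, hpu, hσs, List.append_nil]⟩)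
      ⟨u₂, fun a ha => hu a (mem_of_mem_proj ha), hw₂mem⟩
  have hu₂'E2 : ∀ a ∈ u₂', a ∈ E2 ∧ a ∉ Ek := by
    intro a ha
    have hnk := (hu₂'P a ha).2
    have : a ∈ E2 ∪ Ek := hu₂'mem.1 a (by simp [ha])
    exact ⟨this.resolve_right hnk, hnk⟩
  -- cross-emptiness
  have h2not1 : ∀ a ∈ u₂', a ∉ E1 := fun a ha h1 =>
    (hu₂'E2 a ha).2 (hsh ⟨h1, (hu₂'E2 a ha).1⟩)
  have h1not2 : ∀ a ∈ u₁', a ∉ E2 := fun a ha h2 =>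
    (hu₁'E1 a ha).2 (hsh ⟨(hu₁'E1 a ha).1, h2⟩)
  have h1notK : ∀ a ∈ u₁', a ∉ Ek := fun a ha => (hu₁'E1 a ha).2
  have h2notK : ∀ a ∈ u₂', a ∉ Ek := fun a ha => (hu₂'E2 a ha).2
  have h1not2K : ∀ a ∈ u₁', a ∉ E2 ∪ Ek := by
    intro a ha h; rcases h with h | h
    · exact h1not2 a ha h
    · exact h1notK a ha h
  refine ⟨u₁' ++ u₂', ?_, ?_, ?_, proj_mem_star _ _, ?_, ?_⟩
  · intro a ha
    rcases List.mem_append.1 ha with ha | ha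
    · exact hu₁'P a ha
    · exact hu₂'P a ha
  · -- star (E1 ∪ (E2 ∪ Ek))
    intro a ha
    simp only [List.mem_append, List.mem_singleton] at ha
    rcases ha with (ha | ha | ha) | rfl
    · exact hsstar a ha
    · exact Or.inl (hu₁'E1 a ha).1
    · exact Or.inr (Or.inl (hu₂'E2 a ha).1)
    · exact Or.inr (Or.inr hσk)
  · -- proj E1 ∈ LG1
    have he : proj E1 (s ++ (u₁' ++ u₂') ++ [σ]) = proj E1 (s₁ ++ u₁' ++ [σ]) := by
      simp only [hs₁, proj_append, proj_proj hE1, proj_nil_of E1 h2not1, List.append_nil]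
    rw [he]; exact hu₁'mem.2
  · -- proj E2 (proj (E2 ∪ Ek) _) ∈ LG2
    have he : proj E2 (proj (E2 ∪ Ek) (s ++ (u₁' ++ u₂') ++ [σ]))
        = proj E2 (s₂ ++ u₂' ++ [σ]) := by
      simp only [hs₂, proj_proj hE2, proj_append, proj_nil_of E2 h1not2, List.nil_append]
    rw [he]; exact hu₂'mem.2
  · -- proj Ek (proj (E2 ∪ Ek) _) ∈ LGk
    have he : proj Ek (proj (E2 ∪ Ek) (s ++ (u₁' ++ u₂') ++ [σ]))
        = proj Ek s ++ [σ] := by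
      simp only [proj_proj hKE2, proj_append, proj_nil_of Ek h1notK,
        proj_nil_of Ek h2notK, hσs, List.append_nil, List.nil_append]
    rw [he]; exact hwk
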